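/- In the setting of Lemma 1, if (s, λ(u), x') ∈ T' and (s, x, λ(v)) ∈ T' where λ(u) and x are distinct nonincident with join λ(s), then λ(x') ≠ v. (First step of Lemma 1: otherwise x' = λ(v) and axioms (B),(C) force λ(u) = x, a contradiction.) -/
import Mathlib


/-- An abstract finite projective geometry of dimension `n` with an involution `lam`
satisfying `lam (Π_i) = Π_{n+1-i}`, together with an Ã_n-triangle presentation `T`
compatible with `lam`, satisfying axioms (A)–(F) of Cartwright–Shapiro.
Here `T' = {(u,v,w) ∈ T : dim u + dim v + dim w = n+1}`. -/
structure TrianglePresentation (n : ℕ) (P : Type*) where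
  dim : P → ℕ
  incid : P → P → Prop
  lam : P → P
  T : P → P → P → Prop
  incid_symm : ∀ x y, incid x y → incid y x
  lam_invol : Function.Involutive lam
  dim_mem : ∀ x, 1 ≤ dim x ∧ dim x ≤ n
  lam_dim : ∀ x, dim (lam x) = n + 1 - dim x
  /-- Axiom (A): `(u,v,w) ∈ T` for some `w` iff `λ(u)` and `v` are distinct and incident. -/
  axiomA : ∀ u v, (∃ w, T u v w) ↔ (lam u ≠ v ∧ incid (lam u) v)
  /-- Axiom (B): cyclic invariance. -/
  axiomB : ∀ u v w, T u v w → T v w u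
  /-- Axiom (C): uniqueness of the third vertex. -/
  axiomC : ∀ u v w₁ w₂, T u v w₁ → T u v w₂ → w₁ = w₂
  /-- Axiom (D). -/
  axiomD : ∀ u v w, T u v w → T (lam w) (lam v) (lam u)
  /-- Axiom (E). -/
  axiomE : ∀ u v w, T u v w →
    dim u + dim v + dim w = n + 1 ∨ dim u + dim v + dim w = 2 * (n + 1)
  /-- Axiom (F), stated for the half `T'` of `T`. -/
  axiomF : ∀ x y u x' y',
    (T x y u ∧ dim x + dim y + dim u = n + 1) →
    (T x' y' (lam u) ∧ dim x' + dim y' + dim (lam u) = n + 1) →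
    ∃ w, (T y' x w ∧ dim y' + dim x + dim w = n + 1) ∧
         (T y x' (lam w) ∧ dim y + dim x' + dim (lam w) = n + 1)
  /-- For `u, v ∈ Π`, `(u,v,w) ∈ T'` for some `w` iff `λ(u) ⊋ v`. -/
  exists_T' : ∀ u v,
    (∃ w, T u v w ∧ dim u + dim v + dim w = n + 1) ↔
      (lam u ≠ v ∧ incid (lam u) v ∧ dim v < dim (lam u))

namespace TrianglePresentation

variable {n : ℕ} {P : Type*} (TP : TrianglePresentation n P)

/-- The half `T'` of `T` consisting of triples with dimension sum `n+1`. -/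
def T' (u v w : P) : Prop :=
  TP.T u v w ∧ TP.dim u + TP.dim v + TP.dim w = n + 1

/-- `T'' = T \ T'`. -/
def T'' (u v w : P) : Prop :=
  TP.T u v w ∧ ¬ (TP.dim u + TP.dim v + TP.dim w = n + 1)

/-- `x ⊂ y`: `x` is incident with `y` and `dim x ≤ dim y` (or `x = y`). -/
def Sub (x y : P) : Prop :=
  x = y ∨ (TP.incid x y ∧ TP.dim x ≤ TP.dim y)

/-- `x ⊊ y`: proper containment. -/
def PSub (x y : P) : Prop :=
  TP.Sub x y ∧ x ≠ y

/-- `x + y = V`: no element of `Π` contains both `x` and `y`. -/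
def SumV (x y : P) : Prop :=
  ¬ ∃ z, TP.Sub x z ∧ TP.Sub y z

/-- `x + y = c`: `c` is the join of `x` and `y` in the projective geometry. -/
def JoinEq (x y c : P) : Prop :=
  TP.Sub x c ∧ TP.Sub y c ∧ ∀ z, TP.Sub x z → TP.Sub y z → TP.Sub c z

end TrianglePresentation

/-- First step of Lemma 1: under the hypotheses of Lemma 1, `λ(x') ≠ v`. -/
theorem lemma1_first_step {n : ℕ} {P : Type*} (TP : TrianglePresentation n P)
    (u x s x' v : P)
    (hne : TP.lam u ≠ x) (hni : ¬ TP.incid (TP.lam u) x)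
    (hjoin : TP.JoinEq (TP.lam u) x (TP.lam s))
    (h1 : TP.T' s (TP.lam u) x') (h2 : TP.T' s x (TP.lam v)) :
    TP.lam x' ≠ v := by
  intro h
  have hx' : TP.lam v = x' := by
    have := congrArg TP.lam h
    rw [TP.lam_invol x'] at this; exact this.symm
  have t1 : TP.T x' s (TP.lam u) := TP.axiomB _ _ _ (TP.axiomB _ _ _ h1.1)
  have t2 : TP.T x' s x := by
    have := TP.axiomB _ _ _ (TP.axiomB _ _ _ h2.1)
    rwa [hx'] at this
  exact hne (TP.axiomC _ _ _ _ t1 t2)
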